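/- Let v, v̂, and d be random variables (discrete, finite). If the mutual information I(v; v̂) exceeds the conditional entropy H(v | d), then the mutual information I(v̂; d) is strictly positive. -/

import Mathlib

open Finset

variable {Ω : Type*} [Fintype Ω]

/-- Probability that random variable `X` takes value `s`, under mass function `μ`. -/
noncomputable def probOf (μ : Ω → ℝ) {S : Type*} [DecidableEq S] (X : Ω → S) (s : S) : ℝ :=
  ∑ ω ∈ Finset.univ.filter fun ω => X ω = s, μ ω

/-- `μ` is a probability mass function on the finite sample space `Ω`. -/
def IsProbMass (μ : Ω → ℝ) : Prop := (∀ ω, 0 ≤ μ ω) ∧ ∑ ω, μ ω = 1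

/-- Shannon entropy of a finitely supported random variable. -/
noncomputable def entropy (μ : Ω → ℝ) {S : Type*} [Fintype S] [DecidableEq S]
    (X : Ω → S) : ℝ :=
  ∑ s : S, Real.negMulLog (probOf μ X s)

/-- Conditional Shannon entropy `H(X | Y) = H(X, Y) - H(Y)`. -/
noncomputable def condEntropy (μ : Ω → ℝ) {S T : Type*} [Fintype S] [DecidableEq S]
    [Fintype T] [DecidableEq T] (X : Ω → S) (Y : Ω → T) : ℝ :=
  entropy μ (fun ω => (X ω, Y ω)) - entropy μ Y

/-- Mutual information `I(X; Y) = H(X) + H(Y) - H(X, Y)`. -/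
noncomputable def mutualInfo (μ : Ω → ℝ) {S T : Type*} [Fintype S] [DecidableEq S]
    [Fintype T] [DecidableEq T] (X : Ω → S) (Y : Ω → T) : ℝ :=
  entropy μ X + entropy μ Y - entropy μ (fun ω => (X ω, Y ω))

/-- Conditional mutual information `I(X; Y | Z) = H(X,Z) + H(Y,Z) - H(X,Y,Z) - H(Z)`. -/
noncomputable def condMutualInfo (μ : Ω → ℝ) {S T U : Type*} [Fintype S] [DecidableEq S]
    [Fintype T] [DecidableEq T] [Fintype U] [DecidableEq U]
    (X : Ω → S) (Y : Ω → T) (Z : Ω → U) : ℝ :=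
  entropy μ (fun ω => (X ω, Z ω)) + entropy μ (fun ω => (Y ω, Z ω))
    - entropy μ (fun ω => (X ω, Y ω, Z ω)) - entropy μ Z

/-- Independence of two random variables: the joint distribution factorizes. -/
def IndepRV (μ : Ω → ℝ) {S T : Type*} [DecidableEq S] [DecidableEq T]
    (X : Ω → S) (Y : Ω → T) : Prop :=
  ∀ s t, probOf μ (fun ω => (X ω, Y ω)) (s, t) = probOf μ X s * probOf μ Y t

section Aux

variable {μ : Ω → ℝ}

lemma probOf_nonneg' (hμ : ∀ ω, 0 ≤ μ ω) {S : Type*} [DecidableEq S] (X : Ω → S) (s : S) :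
    0 ≤ probOf μ X s := Finset.sum_nonneg fun ω _ => hμ ω

lemma probOf_congr' {S T : Type*} [DecidableEq S] [DecidableEq T]
    {X : Ω → S} {Y : Ω → T} {a : S} {b : T} (h : ∀ ω, X ω = a ↔ Y ω = b) :
    probOf μ X a = probOf μ Y b := by
  unfold probOf
  congr 1
  exact Finset.filter_congr fun ω _ => h ω

/-- Right marginalization. -/
lemma sum_probOf_pair' {S T : Type*} [Fintype T] [DecidableEq S] [DecidableEq T]
    (X : Ω → S) (Y : Ω → T) (s : S) :
    ∑ t, probOf μ (fun ω => (X ω, Y ω)) (s, t) = probOf μ X s := by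
  unfold probOf
  rw [← Finset.sum_fiberwise (Finset.univ.filter fun ω => X ω = s) Y μ]
  refine Finset.sum_congr rfl fun t _ => ?_
  congr 1
  ext ω
  simp [Prod.ext_iff, and_comm]

/-- Left marginalization. -/
lemma sum_probOf_pair_left' {S T : Type*} [Fintype S] [DecidableEq S] [DecidableEq T]
    (X : Ω → S) (Y : Ω → T) (t : T) :
    ∑ s, probOf μ (fun ω => (X ω, Y ω)) (s, t) = probOf μ Y t := by
  have h : ∀ s, probOf μ (fun ω => (X ω, Y ω)) (s, t)
      = probOf μ (fun ω => (Y ω, X ω)) (t, s) := by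
    intro s
    exact probOf_congr' fun ω => by simp [Prod.ext_iff, and_comm]
  simp only [h]
  exact sum_probOf_pair' Y X t

lemma probOf_pair_le_left' (hμ : ∀ ω, 0 ≤ μ ω) {S T : Type*} [DecidableEq S] [DecidableEq T]
    (X : Ω → S) (Y : Ω → T) (s : S) (t : T) :
    probOf μ (fun ω => (X ω, Y ω)) (s, t) ≤ probOf μ X s := by
  apply Finset.sum_le_sum_of_subset_of_nonneg
  · intro ω hω
    simp only [Finset.mem_filter, Prod.mk.injEq] at *
    tauto
  · exact fun ω _ _ => hμ ω

/-- Subadditivity of `negMulLog` over a finite sum of nonnegative reals. -/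
lemma negMulLog_sum_le' {ι : Type*} (s : Finset ι) (f : ι → ℝ) (hf : ∀ i ∈ s, 0 ≤ f i) :
    Real.negMulLog (∑ i ∈ s, f i) ≤ ∑ i ∈ s, Real.negMulLog (f i) := by
  have h1 : Real.negMulLog (∑ i ∈ s, f i)
      = ∑ i ∈ s, (-(f i) * Real.log (∑ j ∈ s, f j)) := by
    rw [Real.negMulLog, ← Finset.sum_mul, ← Finset.sum_neg_distrib]
  rw [h1]
  refine Finset.sum_le_sum fun i hi => ?_
  rcases eq_or_lt_of_le (hf i hi) with h0 | h0
  · simp [← h0]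
  · rw [Real.negMulLog, neg_mul, neg_mul, neg_le_neg_iff]
    refine mul_le_mul_of_nonneg_left ?_ (le_of_lt h0)
    exact Real.log_le_log h0 (Finset.single_le_sum hf hi)

/-- Gibbs' inequality. -/
lemma gibbs' {ι : Type*} (s : Finset ι) (p q : ι → ℝ) (hp : ∀ i ∈ s, 0 ≤ p i)
    (hq : ∀ i ∈ s, 0 ≤ q i) (hqp : ∀ i ∈ s, q i = 0 → p i = 0)
    (hsum : ∑ i ∈ s, q i ≤ ∑ i ∈ s, p i) :
    ∑ i ∈ s, p i * Real.log (q i) ≤ ∑ i ∈ s, p i * Real.log (p i) := by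
  have key : ∀ i ∈ s, p i - q i ≤ p i * Real.log (p i) - p i * Real.log (q i) := by
    intro i hi
    rcases eq_or_lt_of_le (hp i hi) with h0 | h0
    · simp only [← h0]
      simpa using hq i hi
    · have hq0 : 0 < q i := by
        rcases eq_or_lt_of_le (hq i hi) with h0' | h0'
        · exact absurd (hqp i hi h0'.symm) (ne_of_gt h0)
        · exact h0'
      have := Real.log_le_sub_one_of_pos (x := q i / p i) (by positivity)
      rw [Real.log_div (ne_of_gt hq0) (ne_of_gt h0)] at this
      have h2 : p i * (Real.log (q i) - Real.log (p i)) ≤ p i * (q i / p i - 1) :=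
        mul_le_mul_of_nonneg_left this (le_of_lt h0)
      have h3 : p i * (q i / p i - 1) = q i - p i := by
        field_simp
      nlinarith [h2, h3]
  have h4 := Finset.sum_le_sum key
  rw [Finset.sum_sub_distrib, Finset.sum_sub_distrib] at h4
  linarith

end Aux

section Main

variable {μ : Ω → ℝ}

lemma hent {W : Type*} [Fintype W] [DecidableEq W] (F : Ω → W) :
    entropy μ F = -∑ w : W, probOf μ F w * Real.log (probOf μ F w) := by
  unfold entropy
  rw [← Finset.sum_neg_distrib]
  refine Finset.sum_congr rfl fun w _ => ?_
  rw [Real.negMulLog, neg_mul]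

/-- Monotonicity: `H(Y) ≤ H(X, Y)`. -/
lemma entropy_le_entropy_pair' (hμ : ∀ ω, 0 ≤ μ ω) {S T : Type*} [Fintype S] [DecidableEq S]
    [Fintype T] [DecidableEq T] (X : Ω → S) (Y : Ω → T) :
    entropy μ Y ≤ entropy μ (fun ω => (X ω, Y ω)) := by
  unfold entropy
  rw [Fintype.sum_prod_type_right]
  refine Finset.sum_le_sum fun t _ => ?_
  rw [← sum_probOf_pair_left' X Y t]
  exact negMulLog_sum_le' _ _ fun s _ => probOf_nonneg' hμ _ _

/-- Submodularity: `H(X,Y,Z) + H(X) ≤ H(X,Y) + H(X,Z)`. -/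
lemma entropy_submodular' (hμ : ∀ ω, 0 ≤ μ ω) {S T U : Type*} [Fintype S] [DecidableEq S]
    [Fintype T] [DecidableEq T] [Fintype U] [DecidableEq U]
    (X : Ω → S) (Y : Ω → T) (Z : Ω → U) :
    entropy μ (fun ω => (X ω, Y ω, Z ω)) + entropy μ X
      ≤ entropy μ (fun ω => (X ω, Y ω)) + entropy μ (fun ω => (X ω, Z ω)) := by
  classical
  set p3 : S × T × U → ℝ := fun i => probOf μ (fun ω => (X ω, Y ω, Z ω)) i with hp3
  set p12 : S → T → ℝ := fun x t => probOf μ (fun ω => (X ω, Y ω)) (x, t) with hp12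
  set p13 : S → U → ℝ := fun x u => probOf μ (fun ω => (X ω, Z ω)) (x, u) with hp13
  set p1 : S → ℝ := fun x => probOf μ X x with hp1
  -- basic nonnegativity
  have h3n : ∀ i, 0 ≤ p3 i := fun i => probOf_nonneg' hμ _ _
  have h12n : ∀ x t, 0 ≤ p12 x t := fun x t => probOf_nonneg' hμ _ _
  have h13n : ∀ x u, 0 ≤ p13 x u := fun x u => probOf_nonneg' hμ _ _
  have h1n : ∀ x, 0 ≤ p1 x := fun x => probOf_nonneg' hμ _ _
  -- marginals
  have hm12 : ∀ x t, ∑ u, p3 (x, t, u) = p12 x t := by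
    intro x t
    have : ∀ u, p3 (x, t, u)
        = probOf μ (fun ω => ((X ω, Y ω), Z ω)) ((x, t), u) := by
      intro u
      exact probOf_congr' fun ω => by simp [Prod.ext_iff, and_assoc]
    simp only [this]
    exact sum_probOf_pair' (fun ω => (X ω, Y ω)) Z (x, t)
  have hm13 : ∀ x u, ∑ t, p3 (x, t, u) = p13 x u := by
    intro x u
    have : ∀ t, p3 (x, t, u)
        = probOf μ (fun ω => ((X ω, Z ω), Y ω)) ((x, u), t) := by
      intro t
      refine probOf_congr' fun ω => by simp [Prod.ext_iff]; tauto
    simp only [this]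
    exact sum_probOf_pair' (fun ω => (X ω, Z ω)) Y (x, u)
  have hm1a : ∀ x, ∑ t, p12 x t = p1 x := fun x => sum_probOf_pair' X Y x
  have hm1b : ∀ x, ∑ u, p13 x u = p1 x := fun x => sum_probOf_pair' X Z x
  have h1w : ∀ x, ∑ w : T × U, p3 (x, w) = p1 x := by
    intro x
    exact sum_probOf_pair' X (fun ω => (Y ω, Z ω)) x
  -- p3 ≤ p12, p13, p1
  have h3le12 : ∀ x t u, p3 (x, t, u) ≤ p12 x t := by
    intro x t u
    rw [← hm12 x t]
    exact Finset.single_le_sum (f := fun u => p3 (x, t, u)) (fun u _ => h3n _) (Finset.mem_univ u)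
  have h3le13 : ∀ x t u, p3 (x, t, u) ≤ p13 x u := by
    intro x t u
    rw [← hm13 x u]
    exact Finset.single_le_sum (f := fun t => p3 (x, t, u)) (fun t _ => h3n _) (Finset.mem_univ t)
  have h12le1 : ∀ x t, p12 x t ≤ p1 x := by
    intro x t
    rw [← hm1a x]
    exact Finset.single_le_sum (fun t _ => h12n x t) (Finset.mem_univ t)
  -- the index set
  set A : Finset S := Finset.univ.filter fun x => 0 < p1 x with hA
  set s : Finset (S × T × U) := A ×ˢ (Finset.univ : Finset (T × U)) with hs
  set q : S × T × U → ℝ := fun i => p12 i.1 i.2.1 * p13 i.1 i.2.2 / p1 i.1 with hq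
  have hp1zero : ∀ x, x ∉ A → p1 x = 0 := by
    intro x hx
    simp only [hA, Finset.mem_filter, Finset.mem_univ, true_and, not_lt] at hx
    exact le_antisymm hx (h1n x)
  have h3zero : ∀ i : S × T × U, i ∉ s → p3 i = 0 := by
    intro i hi
    simp only [hs, Finset.mem_product, Finset.mem_univ, and_true] at hi
    have h0 : p1 i.1 = 0 := hp1zero _ hi
    have := h3le12 i.1 i.2.1 i.2.2
    have := h12le1 i.1 i.2.1
    have := h3n i
    nlinarith
  -- Gibbs hypotheses
  have hqn : ∀ i ∈ s, 0 ≤ q i := by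
    intro i _
    have := h12n i.1 i.2.1
    have := h13n i.1 i.2.2
    have := h1n i.1
    positivity
  have hqp : ∀ i ∈ s, q i = 0 → p3 i = 0 := by
    rintro ⟨x, t, u⟩ hi hqi
    simp only [hs, Finset.mem_product, hA, Finset.mem_filter] at hi
    have h1pos : 0 < p1 x := hi.1.2
    have : p12 x t * p13 x u = 0 := by
      have hqi' : p12 x t * p13 x u / p1 x = 0 := hqi
      exact (div_eq_zero_iff.mp hqi').resolve_right (ne_of_gt h1pos)
    rcases mul_eq_zero.mp this with h | h
    · have h5 := h3le12 x t u
      have h6 := h3n (x, t, u)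
      rw [h] at h5
      linarith
    · have h5 := h3le13 x t u
      have h6 := h3n (x, t, u)
      rw [h] at h5
      linarith
  have hsum : ∑ i ∈ s, q i ≤ ∑ i ∈ s, p3 i := by
    have hl : ∑ i ∈ s, q i = ∑ x ∈ A, p1 x := by
      rw [hs, Finset.sum_product]
      refine Finset.sum_congr rfl fun x hx => ?_
      have h1pos : 0 < p1 x := (Finset.mem_filter.mp hx).2
      have : ∑ w : T × U, q (x, w)
          = (∑ t, p12 x t) * (∑ u, p13 x u) / p1 x := by
        rw [Fintype.sum_prod_type, Finset.sum_mul_sum]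
        simp only [hq]
        rw [Finset.sum_div]
        refine Finset.sum_congr rfl fun t _ => ?_
        rw [Finset.sum_div]
      rw [this, hm1a, hm1b]
      field_simp
    have hr : ∑ i ∈ s, p3 i = ∑ x ∈ A, p1 x := by
      rw [hs, Finset.sum_product]
      refine Finset.sum_congr rfl fun x _ => ?_
      exact h1w x
    rw [hl, hr]
  have gibbs := gibbs' s p3 q (fun i _ => h3n i) hqn hqp hsum
  -- rewrite log q
  have hlogq : ∑ i ∈ s, p3 i * Real.log (q i)
      = ∑ i ∈ s, p3 i * (Real.log (p12 i.1 i.2.1) + Real.log (p13 i.1 i.2.2)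
          - Real.log (p1 i.1)) := by
    refine Finset.sum_congr rfl fun i hi => ?_
    rcases eq_or_lt_of_le (h3n i) with h0 | h0
    · rw [← h0]; ring
    · have h12pos : 0 < p12 i.1 i.2.1 := lt_of_lt_of_le h0 (h3le12 i.1 i.2.1 i.2.2)
      have h13pos : 0 < p13 i.1 i.2.2 := lt_of_lt_of_le h0 (h3le13 i.1 i.2.1 i.2.2)
      have h1pos : 0 < p1 i.1 := lt_of_lt_of_le h12pos (h12le1 i.1 i.2.1)
      congr 1
      rw [hq]
      rw [Real.log_div (by positivity) (ne_of_gt h1pos), Real.log_mul (ne_of_gt h12pos) (ne_of_gt h13pos)]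
  rw [hlogq] at gibbs
  -- extend sums from s to univ
  have hext : ∀ g : S × T × U → ℝ, ∑ i ∈ s, p3 i * g i = ∑ i : S × T × U, p3 i * g i := by
    intro g
    have hz : ∀ i ∈ (Finset.univ : Finset (S × T × U)), i ∉ s → p3 i * g i = 0 := by
      intro i _ hi
      rw [h3zero i hi, zero_mul]
    exact Finset.sum_subset (Finset.subset_univ s) hz
  have gA : ∑ i ∈ s, p3 i * (Real.log (p12 i.1 i.2.1) + Real.log (p13 i.1 i.2.2)
      - Real.log (p1 i.1)) = ∑ i : S × T × U, p3 i * (Real.log (p12 i.1 i.2.1)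
      + Real.log (p13 i.1 i.2.2) - Real.log (p1 i.1)) :=
    hext fun i => Real.log (p12 i.1 i.2.1) + Real.log (p13 i.1 i.2.2) - Real.log (p1 i.1)
  have gB : ∑ i ∈ s, p3 i * Real.log (p3 i) = ∑ i : S × T × U, p3 i * Real.log (p3 i) :=
    hext fun i => Real.log (p3 i)
  rw [gA, gB] at gibbs
  simp only [mul_sub, mul_add, Finset.sum_sub_distrib, Finset.sum_add_distrib] at gibbs
  -- identify each marginal sum
  have e12 : ∑ i : S × T × U, p3 i * Real.log (p12 i.1 i.2.1)
      = ∑ w : S × T, p12 w.1 w.2 * Real.log (p12 w.1 w.2) := by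
    simp only [Fintype.sum_prod_type]
    refine Finset.sum_congr rfl fun x _ => Finset.sum_congr rfl fun t _ => ?_
    rw [← Finset.sum_mul, hm12]
  have e13 : ∑ i : S × T × U, p3 i * Real.log (p13 i.1 i.2.2)
      = ∑ w : S × U, p13 w.1 w.2 * Real.log (p13 w.1 w.2) := by
    simp only [Fintype.sum_prod_type]
    refine Finset.sum_congr rfl fun x _ => ?_
    rw [Finset.sum_comm]
    refine Finset.sum_congr rfl fun u _ => ?_
    rw [← Finset.sum_mul, hm13]
  have e1 : ∑ i : S × T × U, p3 i * Real.log (p1 i.1)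
      = ∑ x : S, p1 x * Real.log (p1 x) := by
    rw [Fintype.sum_prod_type]
    refine Finset.sum_congr rfl fun x _ => ?_
    dsimp only
    rw [← Finset.sum_mul, h1w x]
  rw [e12, e13, e1] at gibbs
  -- convert to entropies
  have H123 : entropy μ (fun ω => (X ω, Y ω, Z ω))
      = -∑ i : S × T × U, p3 i * Real.log (p3 i) := by
    rw [hent (fun ω => (X ω, Y ω, Z ω))]
  have H12 : entropy μ (fun ω => (X ω, Y ω))
      = -∑ w : S × T, p12 w.1 w.2 * Real.log (p12 w.1 w.2) := by
    rw [hent (fun ω => (X ω, Y ω))]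
  have H13 : entropy μ (fun ω => (X ω, Z ω))
      = -∑ w : S × U, p13 w.1 w.2 * Real.log (p13 w.1 w.2) := by
    rw [hent (fun ω => (X ω, Z ω))]
  have H1 : entropy μ X = -∑ x : S, p1 x * Real.log (p1 x) := by
    rw [hent X]
  rw [H123, H12, H13, H1]
  linarith
end Main

theorem leakage {V VH D : Type*} [Fintype V] [DecidableEq V] [Fintype VH] [DecidableEq VH] [Fintype D] [DecidableEq D] (μ : Ω → ℝ) (hμ : IsProbMass μ) (v : Ω → V) (vh : Ω → VH) (d : Ω → D)
    (h : mutualInfo μ v vh > condEntropy μ v d) :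
    mutualInfo μ vh d > 0 := by
  obtain ⟨hμ0, -⟩ := hμ
  have hsub := entropy_submodular' hμ0 v vh d
  have hmono := entropy_le_entropy_pair' hμ0 v (fun ω => (vh ω, d ω))
  unfold mutualInfo condEntropy at *
  linarith
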